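/- Let $k$ be a field, $d \ge 1$, and $a_0, \dots, a_{d-1}$ pairwise distinct elements of $k$. Let $I \subseteq k[x_1,\dots,x_n]$ be a monomial ideal of colength $d$ with minimal monomial generators $x^{M_1},\dots,x^{M_r}$, and let $J_a$ be the ideal generated by the polynomials $f_i = \prod_{j=1}^n (x_j - a_0)(x_j - a_1)\cdots(x_j - a_{M_{ij}-1})$ for $i = 1,\dots,r$. Then the $d$ points $(a_{L_1},\dots,a_{L_n}) \in k^n$, as $x^L$ ranges over the $d$ monomials not in $I$, are pairwise distinct and all lie in the zero set of $J_a$. -/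

import Mathlib

open MvPolynomial

theorem stmt_7 (k : Type*) [Field k] (n d r : ℕ) (hd : 1 ≤ d)
    (a : ℕ → k) (ha : ∀ i < d, ∀ j < d, a i = a j → i = j)
    (M : Fin r → (Fin n →₀ ℕ))
    (I : Ideal (MvPolynomial (Fin n) k))
    (hgen : I = Ideal.span (Set.range fun i => (monomial (M i) (1 : k) : MvPolynomial (Fin n) k)))
    (hmin : ∀ i j : Fin r, i ≠ j → ¬ M i ≤ M j)
    (hcolen : Module.finrank k (MvPolynomial (Fin n) k ⧸ I) = d)
    (J : Ideal (MvPolynomial (Fin n) k))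
    (hJ : J = Ideal.span (Set.range fun i =>
      (∏ j : Fin n, ∏ m ∈ Finset.range (M i j), (X j - C (a m)) : MvPolynomial (Fin n) k))) :
    Set.InjOn (fun L : Fin n →₀ ℕ => fun j => a (L j))
      {L : Fin n →₀ ℕ | (monomial L (1 : k) : MvPolynomial (Fin n) k) ∉ I} ∧
    Set.ncard {L : Fin n →₀ ℕ | (monomial L (1 : k) : MvPolynomial (Fin n) k) ∉ I} = d ∧
    ∀ L ∈ {L : Fin n →₀ ℕ | (monomial L (1 : k) : MvPolynomial (Fin n) k) ∉ I},
      ∀ f ∈ J, MvPolynomial.eval (fun j => a (L j)) f = 0 := by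
  classical
  set T : Set (Fin n →₀ ℕ) := {L | ∃ i, M i ≤ L} with hT
  have hmem : ∀ f : MvPolynomial (Fin n) k, f ∈ I ↔ ↑f.support ⊆ T := by
    intro f
    rw [hgen, show (Set.range fun i => (monomial (M i) (1 : k) : MvPolynomial (Fin n) k))
        = (fun s => monomial s (1:k)) '' Set.range M from by rw [← Set.range_comp]; rfl,
      mem_ideal_span_monomial_image]
    constructor
    · intro h L hL
      obtain ⟨s, ⟨i, rfl⟩, hs⟩ := h L (by simpa using hL)
      exact ⟨i, hs⟩
    · intro h L hL
      obtain ⟨i, hi⟩ := h (by simpa using hL)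
      exact ⟨M i, ⟨i, rfl⟩, hi⟩
  have hSset : {L : Fin n →₀ ℕ | (monomial L (1 : k) : MvPolynomial (Fin n) k) ∉ I} = Tᶜ := by
    ext L
    rw [Set.mem_setOf_eq, Set.mem_compl_iff, hmem]
    rw [show ((monomial L) (1:k)).support = {L} from
      MvPolynomial.support_monomial.trans (if_neg one_ne_zero)]
    simp
  -- claim 2: cardinality
  have hcard : Set.ncard {L : Fin n →₀ ℕ |
      (monomial L (1 : k) : MvPolynomial (Fin n) k) ∉ I} = d := by
    rw [hSset]
    have hPI : I.restrictScalars k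
        = (MvPolynomial.restrictSupport k T : Submodule k (MvPolynomial (Fin n) k)) := by
      ext f
      rw [Submodule.restrictScalars_mem, hmem f]
      exact Iff.rfl
    have hc : IsCompl (MvPolynomial.restrictSupport k T : Submodule k (MvPolynomial (Fin n) k))
        (MvPolynomial.restrictSupport k Tᶜ) := by
      have hc0 : IsCompl (Finsupp.supported k k T) (Finsupp.supported k k Tᶜ) := by
        constructor
        · exact Finsupp.disjoint_supported_supported disjoint_compl_right
        · rw [codisjoint_iff, ← Finsupp.supported_union, Set.union_compl_self,
            Finsupp.supported_univ]
      simp only [MvPolynomial.restrictSupport, AddMonoidAlgebra.supported_eq_map]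
      exact (Submodule.orderIsoMapComap _).isCompl hc0
    have e1 : (MvPolynomial (Fin n) k ⧸ I) ≃ₗ[k]
        (MvPolynomial (Fin n) k ⧸ I.restrictScalars k) :=
      (Submodule.Quotient.restrictScalarsEquiv k I).symm
    have e2 : (MvPolynomial (Fin n) k ⧸ I.restrictScalars k) ≃ₗ[k] (↥Tᶜ →₀ k) := by
      rw [hPI]
      exact (Submodule.quotientEquivOfIsCompl _ _ hc).trans (AddMonoidAlgebra.supportedEquivFinsupp _)
    have := (e1.trans e2).finrank_eq
    rw [hcolen] at this
    rw [← Nat.card_coe_set_eq, Nat.card, this]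
    simp [Module.finrank, rank_finsupp_self']
  -- finiteness
  have hfin : (Tᶜ : Set (Fin n →₀ ℕ)).Finite := by
    by_contra h
    rw [hSset, Set.Infinite.ncard h] at hcard
    omega
  -- exponent bound
  have hbound : ∀ L ∈ (Tᶜ : Set (Fin n →₀ ℕ)), ∀ j : Fin n, L j < d := by
    intro L hL j
    have hsub : ↑((Finset.range (L j + 1)).image (fun t => Finsupp.single j t))
        ⊆ (Tᶜ : Set (Fin n →₀ ℕ)) := by
      intro x hx
      simp only [Finset.coe_image, Finset.coe_range, Set.mem_image, Set.mem_Iio] at hx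
      obtain ⟨t, ht, rfl⟩ := hx
      intro hxT
      obtain ⟨i, hi⟩ := hxT
      exact hL ⟨i, hi.trans (fun j' => by
        rcases eq_or_ne j' j with rfl | hne
        · simpa using Nat.le_of_lt_succ ht
        · rw [Finsupp.single_eq_of_ne' hne.symm]; exact Nat.zero_le _)⟩
    have hle := Set.ncard_le_ncard hsub hfin
    rw [Set.ncard_coe_finset, Finset.card_image_of_injective _ (Finsupp.single_injective j),
      Finset.card_range, hSset] at *
    omega
  refine ⟨?_, hcard, ?_⟩
  · rw [hSset]
    intro L hL L' hL' heq
    ext j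
    exact ha (L j) (hbound L hL j) (L' j) (hbound L' hL' j) (congrFun heq j)
  · intro L hL f hf
    rw [hSset] at hL
    have hker : J ≤ RingHom.ker (MvPolynomial.eval (fun j => a (L j))) := by
      rw [hJ, Ideal.span_le]
      rintro _ ⟨i, rfl⟩
      have : ¬ M i ≤ L := fun h => hL ⟨i, h⟩
      rw [Finsupp.le_def] at this
      push_neg at this
      obtain ⟨j, hj⟩ := this
      simp only [SetLike.mem_coe, RingHom.mem_ker, map_prod]
      apply Finset.prod_eq_zero (Finset.mem_univ j)
      apply Finset.prod_eq_zero (Finset.mem_range.2 hj)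
      simp
    exact hker hf
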